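/- Let c ≥ 0 and define ρ = 1/(2+c). If the total entropy bound H(c) = (1/2)·(h_B(1/(2+c)) + (2/(2+c))·ln 2) satisfies H(c) ≥ 0.4075, then c ≤ 2.6802 and hence ρ ≥ 0.21367. -/

import Mathlib

/-- The binary entropy function. -/
noncomputable def hB (p : ℝ) : ℝ := -p * Real.log p - (1 - p) * Real.log (1 - p)

private noncomputable def gfun (x : ℝ) : ℝ :=
  -x * Real.log x - (1 - x) * Real.log (1 - x) + 2 * x * Real.log 2

private lemma log_lb (x t : ℝ) (n : ℕ) (hx : 0 < x) (ht : 0 ≤ t)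
    (h : 1 < x * ∑ i ∈ Finset.range n, t ^ i / (Nat.factorial i : ℝ)) :
    -t < Real.log x := by
  rw [Real.lt_log_iff_exp_lt hx, Real.exp_neg]
  have hS : (∑ i ∈ Finset.range n, t ^ i / (Nat.factorial i : ℝ)) ≤ Real.exp t :=
    Real.sum_le_exp_of_nonneg ht n
  have hexp : 0 < Real.exp t := Real.exp_pos t
  rw [inv_lt_iff_one_lt_mul₀ hexp]
  nlinarith

private lemma lb1 : (-0.1570290 : ℝ) < Real.log 0.85468 := by
  apply log_lb _ _ 7 (by norm_num) (by norm_num)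
  simp only [Finset.sum_range_succ, Finset.sum_range_zero, Nat.factorial]
  norm_num

private lemma lb2 : (-0.2403795 : ℝ) < Real.log 0.78633 := by
  apply log_lb _ _ 8 (by norm_num) (by norm_num)
  simp only [Finset.sum_range_succ, Finset.sum_range_zero, Nat.factorial]
  norm_num

private lemma log_r0_lb : Real.log 0.21367 > -0.1570290 - 2 * Real.log 2 := by
  have h : (0.21367 : ℝ) = 0.85468 / 4 := by norm_num
  have h4 : Real.log 4 = 2 * Real.log 2 := by
    rw [show (4 : ℝ) = 2 ^ 2 by norm_num, Real.log_pow]; push_cast; ring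
  rw [h, Real.log_div (by norm_num) (by norm_num), h4]
  have := lb1
  linarith

private lemma gfun_r0_lt : gfun 0.21367 < 0.815 := by
  unfold gfun
  have h1 := log_r0_lb
  have h2 := lb2
  have h3 := Real.log_two_lt_d9
  have h4 := Real.log_two_gt_d9
  norm_num
  nlinarith

private lemma gfun_hasDerivAt {x : ℝ} (hx0 : 0 < x) (hx1 : x < 1) :
    HasDerivAt gfun (Real.log (1 - x) - Real.log x + 2 * Real.log 2) x := by
  have hne : x ≠ 0 := hx0.ne'
  have h1ne : (1 : ℝ) - x ≠ 0 := by linarith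
  have hA : HasDerivAt (fun y : ℝ => -y * Real.log y) ((-1) * Real.log x + -x * x⁻¹) x :=
    ((hasDerivAt_id x).neg.mul (Real.hasDerivAt_log hne))
  have hin : HasDerivAt (fun y : ℝ => 1 - y) (-1) x := by
    simpa using (hasDerivAt_id' x).const_sub (1 : ℝ)
  have hlog : HasDerivAt (fun y : ℝ => Real.log (1 - y)) ((1 - x)⁻¹ * (-1)) x :=
    (Real.hasDerivAt_log h1ne).comp x hin
  have hB : HasDerivAt (fun y : ℝ => (1 - y) * Real.log (1 - y))
      ((-1) * Real.log (1 - x) + (1 - x) * ((1 - x)⁻¹ * (-1))) x := hin.mul hlog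
  have hC : HasDerivAt (fun y : ℝ => 2 * y * Real.log 2) (2 * Real.log 2) x := by
    simpa using ((hasDerivAt_id x).const_mul (2 : ℝ)).mul_const (Real.log 2)
  have : HasDerivAt gfun (-1 * Real.log x + -x * x⁻¹ - (-1 * Real.log (1 - x) + (1 - x) * ((1 - x)⁻¹ * -1)) + 2 * Real.log 2) x := (hA.sub hB).add hC
  convert this using 1
  field_simp
  ring

private lemma gfun_strictMono : StrictMonoOn gfun (Set.Ioc 0 (0.21367 : ℝ)) := by
  apply strictMonoOn_of_deriv_pos
  · exact convex_Ioc _ _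
  · intro x hx
    exact ((gfun_hasDerivAt hx.1 (by nlinarith [hx.2])).differentiableAt).continuousAt.continuousWithinAt
  · intro x hx
    rw [interior_Ioc] at hx
    have hx0 : 0 < x := hx.1
    have hx1 : x < 1 := by nlinarith [hx.2]
    rw [(gfun_hasDerivAt hx0 hx1).deriv]
    have hlt : Real.log x < Real.log (4 * (1 - x)) :=
      Real.log_lt_log hx0 (by nlinarith [hx.2])
    rw [Real.log_mul (by norm_num) (by linarith)] at hlt
    have h4 : Real.log 4 = 2 * Real.log 2 := by
      rw [show (4 : ℝ) = 2 ^ 2 by norm_num, Real.log_pow]; push_cast; ring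
    rw [h4] at hlt
    linarith

/-- If the entropy bound `H(c) = (1/2)(h_B(1/(2+c)) + (2/(2+c)) ln 2)` is at
least `0.4075` for some `c ≥ 0`, then `c ≤ 2.6802` and the density
`ρ = 1/(2+c)` is at least `0.21367`. -/
theorem density_lower_bound (c : ℝ) (hc : 0 ≤ c)
    (hH : (1 / 2) * (hB (1 / (2 + c)) + (2 / (2 + c)) * Real.log 2) ≥ 0.4075) :
    c ≤ 2.6802 ∧ 1 / (2 + c) ≥ 0.21367 := by
  have h2c : (0 : ℝ) < 2 + c := by linarith
  have hρpos : 0 < 1 / (2 + c) := by positivity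
  have key : 1 / (2 + c) ≥ 0.21367 := by
    by_contra hlt
    push_neg at hlt
    have hmem : 1 / (2 + c) ∈ Set.Ioc (0 : ℝ) 0.21367 := ⟨hρpos, hlt.le⟩
    have hmem' : (0.21367 : ℝ) ∈ Set.Ioc (0 : ℝ) 0.21367 := by norm_num
    have hmono := gfun_strictMono hmem hmem' hlt
    have hg : gfun (1 / (2 + c)) ≥ 0.815 := by
      unfold gfun
      unfold hB at hH
      have h22 : (2 : ℝ) / (2 + c) = 2 * (1 / (2 + c)) := by ring
      rw [h22] at hH
      nlinarith [hH]
    have := gfun_r0_lt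
    linarith
  refine ⟨?_, key⟩
  have h1 : (0.21367 : ℝ) * (2 + c) ≤ 1 := by
    rw [ge_iff_le, le_div_iff₀ h2c] at key
    exact key
  nlinarith
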